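/- (Bernstein inequality with explicit constant.) Let X₁,…,X_N be real, mean-zero, independent random variables with finite ψ₁-Orlicz norms, and set R := max_{i∈[1:N]} ‖X_i‖_{ψ₁} > 0. Then for every t ≥ 0, ℙ(|(1/N)Σ_{i=1}^N X_i| ≥ t) ≤ 2·exp(−(1/10)·min{t²/R², t/R}·N). -/

import Mathlib

open MeasureTheory ProbabilityTheory
open scoped ENNReal NNReal BigOperators RealInnerProductSpace

noncomputable section

/-- Euclidean space `ℝ^d`. -/
abbrev Euc (d : ℕ) : Type := EuclideanSpace ℝ (Fin d)

/-- The support of a Borel measure: points all of whose neighborhoods have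
positive measure. -/
def msupport {α : Type*} [TopologicalSpace α] [MeasurableSpace α] (μ : Measure α) : Set α :=
  {x | ∀ U : Set α, IsOpen U → x ∈ U → 0 < μ U}

/-- The `p`-Wasserstein distance between two measures on `ℝ^d` (valued in `ℝ≥0∞`),
defined as the infimum over couplings of the `p`-th root of the `p`-cost. -/
def Wp {d : ℕ} (p : ℝ) (μ ν : Measure (Euc d)) : ℝ≥0∞ :=
  sInf { r : ℝ≥0∞ | ∃ π : Measure (Euc d × Euc d),
      IsProbabilityMeasure π ∧ π.map Prod.fst = μ ∧ π.map Prod.snd = ν ∧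
      r = (∫⁻ z, (ENNReal.ofReal ‖z.1 - z.2‖) ^ p ∂π) ^ (1 / p) }

/-- The empirical measure of `N` points of `ℝ^d`. -/
def empMeas {d N : ℕ} (x : Fin N → Euc d) : Measure (Euc d) :=
  (N : ℝ≥0∞)⁻¹ • ∑ i, Measure.dirac (x i)

/-- The `ψ_p`-Orlicz norm of a real random variable (valued in `ℝ≥0∞`; `⊤` if no
finite `t` works). -/
def psiNorm {Ω : Type*} [MeasurableSpace Ω] (p : ℝ) (P : Measure Ω) (X : Ω → ℝ) : ℝ≥0∞ :=
  sInf {s : ℝ≥0∞ | ∃ t : ℝ, 0 < t ∧ s = ENNReal.ofReal t ∧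
    ∫⁻ ω, ENNReal.ofReal (Real.exp ((|X ω| / t) ^ p)) ∂P ≤ 2}

/-- The `L^p` norm `(E|X|^p)^{1/p}` of a real random variable (valued in `ℝ≥0∞`). -/
def LpNorm {Ω : Type*} [MeasurableSpace Ω] (p : ℝ) (P : Measure Ω) (X : Ω → ℝ) : ℝ≥0∞ :=
  (∫⁻ ω, (ENNReal.ofReal |X ω|) ^ p ∂P) ^ (1 / p)

/-- `prodCLM F b s = F (b+s-1) ∘ ⋯ ∘ F (b+1) ∘ F b` (so `prodCLM F b s = Ψ_{b+s,b}`),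
with `prodCLM F b 0 = id`. -/
def prodCLM {d : ℕ} (F : ℕ → (Euc d →L[ℝ] Euc d)) : ℕ → ℕ → (Euc d →L[ℝ] Euc d)
  | _, 0 => ContinuousLinearMap.id ℝ (Euc d)
  | b, s + 1 => (F (b + s)).comp (prodCLM F b s)

/-- `α_p(s) = s²` on `[0,1]` and `s^p` for `s > 1`. -/
def alphaP (p s : ℝ) : ℝ := if s ≤ 1 then s ^ 2 else s ^ p

/-- The inverse of `α_p` on `[0,∞)`: `√y` on `[0,1]` and `y^{1/p}` for `y > 1`. -/
def alphaPInv (p y : ℝ) : ℝ := if y ≤ 1 then Real.sqrt y else y ^ (1 / p)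

/-- Convolution of two measures on `ℝ^d`: the image of `μ ⊗ ν` under addition. -/
def mconv {d : ℕ} (μ ν : Measure (Euc d)) : Measure (Euc d) :=
  (μ.prod ν).map (fun z => z.1 + z.2)

/-- `h(x) = x² / (ln(2 + 1/x))²`. -/
def hfun (x : ℝ) : ℝ := x ^ 2 / (Real.log (2 + 1 / x)) ^ 2

/-- The inverse of `h` on `(0,∞)`. -/
def hInv (y : ℝ) : ℝ := sInf {x : ℝ | 0 < x ∧ y ≤ hfun x}

/-- The `ℓ^∞` diameter of a subset of `ℝ^d`. -/
def diamInf {d : ℕ} (S : Set (Euc d)) : ℝ :=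
  sSup {r : ℝ | ∃ x ∈ S, ∃ y ∈ S, r = ‖(fun j => x j - y j : Fin d → ℝ)‖}

/-- The nominal ambiguity radius `ε_N(β, ρ)` with constants `C`, `c`. -/
def epsN (p : ℝ) (d : ℕ) (C c : ℝ) (N : ℕ) (β ρ : ℝ) : ℝ :=
  if (d : ℝ) / 2 < p then
    (Real.log (C / β) / c) ^ (1 / (2 * p)) * ρ / (N : ℝ) ^ (1 / (2 * p))
  else if p = (d : ℝ) / 2 then
    (hInv (Real.log (C / β) / (c * N))) ^ (1 / p) * ρ
  else
    (Real.log (C / β) / c) ^ (1 / (d : ℝ)) * ρ / (N : ℝ) ^ (1 / (d : ℝ))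

/-- The constant `C⋆` of the mean empirical Wasserstein decay bound. -/
def Cstar (p : ℝ) (d : ℕ) : ℝ :=
  Real.sqrt d * 2 ^ (((d : ℝ) - 2) / (2 * p)) *
    (1 / (1 - 2 ^ (p - (d : ℝ) / 2)) + 1 / (1 - 2 ^ (-p))) ^ (1 / p)

end

set_option linter.unusedSectionVars false
set_option linter.unusedVariables false
namespace BernsteinAux

lemma lemA (z : ℝ) : Real.exp z ≤ 1 + z + (Real.exp |z| - 1 - |z|) := by
  rcases le_or_gt 0 z with h | h
  · rw [abs_of_nonneg h]; ring_nf; exact le_rfl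
  · rw [abs_of_neg h]
    have h1 : -z < Real.sinh (-z) := Real.self_lt_sinh_iff.mpr (neg_pos.mpr h)
    rw [Real.sinh_eq, neg_neg] at h1
    nlinarith [h1]

/-- convexity: `e^{uy} ≤ 1 - u + u e^y` for `u ∈ [0,1]`. -/
lemma lemC (u y : ℝ) (hu0 : 0 ≤ u) (hu1 : u ≤ 1) :
    Real.exp (u * y) ≤ 1 - u + u * Real.exp y := by
  have := convexOn_exp.2 (Set.mem_univ y) (Set.mem_univ 0) hu0 (by linarith : (0:ℝ) ≤ 1 - u)
    (by ring)
  simp only [smul_eq_mul, mul_zero, add_zero, Real.exp_zero, mul_one] at this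
  linarith

lemma lemKey (u y : ℝ) (hu0 : 0 ≤ u) (hu1 : u ≤ 1) (hy : 0 ≤ y) :
    Real.exp (u * y) - 1 - u * y ≤ u ^ 2 * (Real.exp y - 1 - y) := by
  set f : ℝ → ℝ := fun x => u ^ 2 * (Real.exp x - 1 - x) - (Real.exp (u * x) - 1 - u * x)
    with hf
  have hderiv : ∀ x : ℝ, HasDerivAt f (u ^ 2 * (Real.exp x - 1) - u * (Real.exp (u * x) - 1)) x := by
    intro x
    have h1 : HasDerivAt (fun x : ℝ => Real.exp x) (Real.exp x) x := Real.hasDerivAt_exp x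
    have h2 : HasDerivAt (fun x : ℝ => Real.exp (u * x)) (Real.exp (u * x) * u) x := by
      have := (Real.hasDerivAt_exp (u * x)).comp x ((hasDerivAt_id x).const_mul u)
      exact this.congr_deriv (by simp [mul_comm])
    have := ((h1.sub_const 1).sub (hasDerivAt_id x)).const_mul (u ^ 2)
      |>.sub (((h2.sub_const 1).sub ((hasDerivAt_id x).const_mul u)))
    refine this.congr_deriv ?_
    ring
  have hmono : MonotoneOn f (Set.Ici (0:ℝ)) := by
    apply monotoneOn_of_deriv_nonneg (convex_Ici 0)
    · exact (Continuous.continuousOn (by fun_prop))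
    · intro x hx
      exact (hderiv x).differentiableAt.differentiableWithinAt
    · intro x hx
      rw [(hderiv x).deriv]
      have hx0 : (0:ℝ) ≤ x := le_of_lt (by simpa using hx)
      have hc : Real.exp (u * x) - 1 ≤ u * (Real.exp x - 1) := by
        have := lemC u x hu0 hu1
        linarith
      nlinarith [hc, hu0]
  have h0 : f 0 ≤ f y := hmono (by simp) (by simpa using hy) hy
  simp only [hf, mul_zero, Real.exp_zero] at h0
  linarith

/-- Master pointwise bound. -/
lemma lemMaster (l K x : ℝ) (hl : 0 ≤ l) (hK : 0 < K) (hlK : l * K ≤ 1) :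
    Real.exp (l * x) ≤ 1 + l * x + (l * K) ^ 2 * (Real.exp (|x| / K) - 1) := by
  have hA := lemA (l * x)
  have habs : |l * x| = (l * K) * (|x| / K) := by
    rw [abs_mul, abs_of_nonneg hl]; field_simp
  have hy : 0 ≤ |x| / K := div_nonneg (abs_nonneg x) hK.le
  have hkey := lemKey (l * K) (|x| / K) (mul_nonneg hl hK.le) hlK hy
  rw [habs] at hA
  nlinarith [hkey, sq_nonneg (l * K), hy]

variable {Ω : Type*} [MeasurableSpace Ω] (P : Measure Ω) [IsProbabilityMeasure P]

lemma int_expabs (Y : Ω → ℝ) (hY : Measurable Y) (K : ℝ) (hK : 0 < K)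
    (h2 : ∫⁻ ω, ENNReal.ofReal (Real.exp (|Y ω| / K)) ∂P ≤ 2) :
    Integrable (fun ω => Real.exp (|Y ω| / K)) P ∧
      ∫ ω, Real.exp (|Y ω| / K) ∂P ≤ 2 := by
  have hmeas : Measurable (fun ω => Real.exp (|Y ω| / K)) := by fun_prop
  have hnn : 0 ≤ᵐ[P] fun ω => Real.exp (|Y ω| / K) :=
    Filter.Eventually.of_forall fun ω => (Real.exp_pos _).le
  have hfin : HasFiniteIntegral (fun ω => Real.exp (|Y ω| / K)) P := by
    rw [hasFiniteIntegral_iff_ofReal hnn]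
    exact lt_of_le_of_lt h2 (by norm_num)
  refine ⟨⟨hmeas.aestronglyMeasurable, hfin⟩, ?_⟩
  rw [integral_eq_lintegral_of_nonneg_ae hnn hmeas.aestronglyMeasurable]
  have : (∫⁻ ω, ENNReal.ofReal (Real.exp (|Y ω| / K)) ∂P).toReal ≤ ((2:ℝ≥0∞)).toReal :=
    ENNReal.toReal_mono (by norm_num) h2
  simpa using this

lemma mgf_bound (Y : Ω → ℝ) (hY : Measurable Y) (hYint : Integrable Y P)
    (hYmean : ∫ ω, Y ω ∂P = 0) (K : ℝ) (hK : 0 < K)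
    (h2 : ∫⁻ ω, ENNReal.ofReal (Real.exp (|Y ω| / K)) ∂P ≤ 2)
    (l : ℝ) (hl : 0 ≤ l) (hlK : l * K ≤ 1) :
    Integrable (fun ω => Real.exp (l * Y ω)) P ∧
      mgf Y P l ≤ Real.exp (l ^ 2 * K ^ 2) := by
  obtain ⟨hintE, hE2⟩ := int_expabs P Y hY K hK h2
  have hintl : Integrable (fun ω => Real.exp (l * Y ω)) P := by
    refine Integrable.mono' hintE ((Real.measurable_exp.comp (hY.const_mul l)).aestronglyMeasurable) ?_
    refine Filter.Eventually.of_forall fun ω => ?_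
    rw [Real.norm_eq_abs, abs_of_pos (Real.exp_pos _), Real.exp_le_exp]
    calc l * Y ω ≤ l * |Y ω| := by
          exact mul_le_mul_of_nonneg_left (le_abs_self _) hl
      _ = (l * K) * (|Y ω| / K) := by field_simp
      _ ≤ 1 * (|Y ω| / K) := by
          exact mul_le_mul_of_nonneg_right hlK (div_nonneg (abs_nonneg _) hK.le)
      _ = |Y ω| / K := one_mul _
  refine ⟨hintl, ?_⟩
  have i3 : Integrable (fun ω => l * Y ω) P := hYint.const_mul l
  have i1 : Integrable (fun ω => 1 + l * Y ω) P := (integrable_const 1).add i3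
  have i4 : Integrable (fun ω => Real.exp (|Y ω| / K) - 1) P := hintE.sub (integrable_const 1)
  have i2 : Integrable (fun ω => (l * K) ^ 2 * (Real.exp (|Y ω| / K) - 1)) P := i4.const_mul _
  have hub : mgf Y P l ≤ 1 + (l * K) ^ 2 * ((∫ ω, Real.exp (|Y ω| / K) ∂P) - 1) := by
    have hrhs : Integrable (fun ω => 1 + l * Y ω + (l * K) ^ 2 * (Real.exp (|Y ω| / K) - 1)) P :=
      i1.add i2
    have hmono := integral_mono hintl hrhs (fun ω => lemMaster l K (Y ω) hl hK hlK)
    rw [mgf]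
    calc ∫ ω, Real.exp (l * Y ω) ∂P
        ≤ ∫ ω, (1 + l * Y ω + (l * K) ^ 2 * (Real.exp (|Y ω| / K) - 1)) ∂P := hmono
      _ = 1 + (l * K) ^ 2 * ((∫ ω, Real.exp (|Y ω| / K) ∂P) - 1) := by
          rw [integral_add i1 i2, integral_add (integrable_const 1) i3,
            integral_const, integral_const_mul, integral_const_mul,
            integral_sub hintE (integrable_const 1), integral_const, hYmean]
          simp
  calc mgf Y P l ≤ 1 + (l * K) ^ 2 * ((∫ ω, Real.exp (|Y ω| / K) ∂P) - 1) := hub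
    _ ≤ 1 + l ^ 2 * K ^ 2 := by nlinarith [sq_nonneg (l * K), hE2]
    _ ≤ Real.exp (l ^ 2 * K ^ 2) := by linarith [Real.add_one_le_exp (l ^ 2 * K ^ 2)]

lemma one_sided (N : ℕ) (Y : Fin N → Ω → ℝ) (hmeas : ∀ i, Measurable (Y i))
    (hint : ∀ i, Integrable (Y i) P) (hmean : ∀ i, ∫ ω, Y i ω ∂P = 0)
    (hindep : iIndepFun Y P)
    (R : ℝ) (hRpos : 0 < R)
    (h2 : ∀ i, ∫⁻ ω, ENNReal.ofReal (Real.exp (|Y i ω| / R)) ∂P ≤ 2)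
    (t : ℝ) (ht : 0 ≤ t) :
    P {ω | (N : ℝ) * t ≤ ∑ i, Y i ω} ≤
      ENNReal.ofReal (Real.exp (-(1 / 10) * min (t ^ 2 / R ^ 2) (t / R) * N)) := by
  set l : ℝ := min (t / (2 * R ^ 2)) (1 / R) with hl
  have hl0 : 0 ≤ l := le_min (by positivity) (by positivity)
  have hlR : l * R ≤ 1 := by
    have : l ≤ 1 / R := min_le_right _ _
    calc l * R ≤ (1 / R) * R := mul_le_mul_of_nonneg_right this hRpos.le
      _ = 1 := by field_simp
  have hb := fun i => mgf_bound P (Y i) (hmeas i) (hint i) (hmean i) R hRpos (h2 i) l hl0 hlR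
  have hintsum : Integrable (fun ω => Real.exp (l * (∑ i, Y i) ω)) P :=
    hindep.integrable_exp_mul_sum hmeas (fun i _ => (hb i).1)
  have hcher := measure_ge_le_exp_mul_mgf (X := fun ω => (∑ i, Y i) ω) (μ := P)
    ((N : ℝ) * t) hl0 hintsum
  have hset : {ω | (N : ℝ) * t ≤ ∑ i, Y i ω} = {ω | (N : ℝ) * t ≤ (∑ i, Y i) ω} := by
    simp [Finset.sum_apply]
  have hmgf : mgf (fun ω => (∑ i, Y i) ω) P l ≤ Real.exp ((N : ℝ) * (l ^ 2 * R ^ 2)) := by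
    have : mgf (∑ i, Y i) P l = ∏ i, mgf (Y i) P l := hindep.mgf_sum hmeas Finset.univ
    calc mgf (fun ω => (∑ i, Y i) ω) P l = ∏ i, mgf (Y i) P l := this
      _ ≤ ∏ _i : Fin N, Real.exp (l ^ 2 * R ^ 2) := by
          apply Finset.prod_le_prod (fun i _ => mgf_nonneg) (fun i _ => (hb i).2)
      _ = Real.exp ((N : ℝ) * (l ^ 2 * R ^ 2)) := by
          rw [Finset.prod_const, ← Real.exp_nat_mul]; simp
  have key : (N : ℝ) * (l ^ 2 * R ^ 2) + (-l * ((N : ℝ) * t)) ≤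
      -(1 / 10) * min (t ^ 2 / R ^ 2) (t / R) * N := by
    have hNn : (0 : ℝ) ≤ (N : ℝ) := Nat.cast_nonneg N
    have hmain : (1 / 10) * min (t ^ 2 / R ^ 2) (t / R) ≤ l * t - l ^ 2 * R ^ 2 := by
      rcases le_or_gt t (2 * R) with hc | hc
      · have hleq : l = t / (2 * R ^ 2) := by
          rw [hl, min_eq_left]
          rw [div_le_div_iff₀ (by positivity) hRpos]
          nlinarith
        have hmin : min (t ^ 2 / R ^ 2) (t / R) ≤ t ^ 2 / R ^ 2 := min_le_left _ _
        rw [hleq]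
        have : t / (2 * R ^ 2) * t - (t / (2 * R ^ 2)) ^ 2 * R ^ 2 = t ^ 2 / (4 * R ^ 2) := by
          field_simp; ring
        rw [this]
        calc (1 / 10) * min (t ^ 2 / R ^ 2) (t / R) ≤ (1 / 10) * (t ^ 2 / R ^ 2) := by linarith
          _ ≤ (1 / 4) * (t ^ 2 / R ^ 2) := by
              have h0 : (0:ℝ) ≤ t ^ 2 / R ^ 2 := by positivity
              linarith
          _ = t ^ 2 / (4 * R ^ 2) := by ring
      · have hleq : l = 1 / R := by
          rw [hl, min_eq_right]
          rw [div_le_div_iff₀ hRpos (by positivity)]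
          nlinarith
        have hmin : min (t ^ 2 / R ^ 2) (t / R) ≤ t / R := min_le_right _ _
        rw [hleq]
        have h1 : 1 / R * t - (1 / R) ^ 2 * R ^ 2 = t / R - 1 := by field_simp
        rw [h1]
        have h2R : 2 ≤ t / R := by rw [le_div_iff₀ hRpos]; linarith
        calc (1 / 10) * min (t ^ 2 / R ^ 2) (t / R) ≤ (1 / 10) * (t / R) := by linarith
          _ ≤ t / R - 1 := by linarith
    nlinarith [hmain, hNn, mul_le_mul_of_nonneg_left hmain hNn]
  have hfinal : (P {ω | (N : ℝ) * t ≤ ∑ i, Y i ω}).toReal ≤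
      Real.exp (-(1 / 10) * min (t ^ 2 / R ^ 2) (t / R) * N) := by
    rw [hset]
    calc (P {ω | (N : ℝ) * t ≤ (∑ i, Y i) ω}).toReal
        ≤ Real.exp (-l * ((N : ℝ) * t)) * mgf (fun ω => (∑ i, Y i) ω) P l := hcher
      _ ≤ Real.exp (-l * ((N : ℝ) * t)) * Real.exp ((N : ℝ) * (l ^ 2 * R ^ 2)) := by
          exact mul_le_mul_of_nonneg_left hmgf (Real.exp_nonneg _)
      _ = Real.exp ((N : ℝ) * (l ^ 2 * R ^ 2) + (-l * ((N : ℝ) * t))) := by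
          rw [← Real.exp_add]; ring_nf
      _ ≤ Real.exp (-(1 / 10) * min (t ^ 2 / R ^ 2) (t / R) * N) := Real.exp_le_exp.mpr key
  rw [← ENNReal.ofReal_toReal (measure_ne_top P _)]
  exact ENNReal.ofReal_le_ofReal hfinal


lemma psi_to_exp {Ω : Type*} [MeasurableSpace Ω] (P : Measure Ω) (X : Ω → ℝ)
    (hX : Measurable X) (hfin : psiNorm 1 P X ≠ ⊤) (R : ℝ) (hRpos : 0 < R)
    (hle : (psiNorm 1 P X).toReal ≤ R) :
    ∫⁻ ω, ENNReal.ofReal (Real.exp (|X ω| / R)) ∂P ≤ 2 := by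
  have hpsiR : psiNorm 1 P X ≤ ENNReal.ofReal R := by
    rw [← ENNReal.ofReal_toReal hfin]
    exact ENNReal.ofReal_le_ofReal hle
  have hstep : ∀ n : ℕ, ∫⁻ ω, ENNReal.ofReal (Real.exp (|X ω| / (R + 1/(n+1)))) ∂P ≤ 2 := by
    intro n
    have hpos : (0:ℝ) < 1/((n:ℝ)+1) := by positivity
    have hlt : psiNorm 1 P X < ENNReal.ofReal (R + 1/((n:ℝ)+1)) :=
      lt_of_le_of_lt hpsiR ((ENNReal.ofReal_lt_ofReal_iff (by positivity)).mpr (by linarith))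
    rw [psiNorm, sInf_lt_iff] at hlt
    obtain ⟨s, hsmem, hs⟩ := hlt
    obtain ⟨t', ht'pos, rfl, hcond⟩ := hsmem
    have ht'lt : t' < R + 1/((n:ℝ)+1) :=
      (ENNReal.ofReal_lt_ofReal_iff (by positivity)).mp hs
    simp only [Real.rpow_one] at hcond
    refine le_trans (lintegral_mono fun ω => ENNReal.ofReal_le_ofReal
      (Real.exp_le_exp.mpr ?_)) hcond
    gcongr
  have hmono : Monotone (fun n : ℕ => fun ω =>
      ENNReal.ofReal (Real.exp (|X ω| / (R + 1/((n:ℝ)+1))))) := by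
    intro m n hmn
    intro ω
    apply ENNReal.ofReal_le_ofReal
    apply Real.exp_le_exp.mpr
    have h1 : (1:ℝ)/((n:ℝ)+1) ≤ 1/((m:ℝ)+1) := by
      apply one_div_le_one_div_of_le (by positivity)
      exact_mod_cast Nat.succ_le_succ hmn
    gcongr
  have hsup : ∀ ω, (⨆ n : ℕ, ENNReal.ofReal (Real.exp (|X ω| / (R + 1/((n:ℝ)+1))))) =
      ENNReal.ofReal (Real.exp (|X ω| / R)) := by
    intro ω
    have hden : Filter.Tendsto (fun n : ℕ => R + 1/((n:ℝ)+1)) Filter.atTop (nhds R) := by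
      have := tendsto_one_div_add_atTop_nhds_zero_nat (𝕜 := ℝ)
      have h2 := Filter.Tendsto.add (tendsto_const_nhds (x := R) (f := Filter.atTop)) this
      simpa using h2
    have hdiv : Filter.Tendsto (fun n : ℕ => |X ω| / (R + 1/((n:ℝ)+1))) Filter.atTop
        (nhds (|X ω| / R)) := Filter.Tendsto.div tendsto_const_nhds hden hRpos.ne'
    have hexp := (Real.continuous_exp.tendsto _).comp hdiv
    have htend := (ENNReal.continuous_ofReal.tendsto _).comp hexp
    exact tendsto_nhds_unique (tendsto_atTop_iSup (fun m n h => hmono h ω)) htend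
  calc ∫⁻ ω, ENNReal.ofReal (Real.exp (|X ω| / R)) ∂P
      = ∫⁻ ω, ⨆ n : ℕ, ENNReal.ofReal (Real.exp (|X ω| / (R + 1/((n:ℝ)+1)))) ∂P :=
        lintegral_congr fun ω => (hsup ω).symm
    _ = ⨆ n : ℕ, ∫⁻ ω, ENNReal.ofReal (Real.exp (|X ω| / (R + 1/((n:ℝ)+1)))) ∂P :=
        lintegral_iSup (fun n => ((hX.abs.div_const _).exp).ennreal_ofReal) hmono
    _ ≤ 2 := iSup_le hstep

end BernsteinAux

/-- Bernstein inequality with explicit constant `c' = 1/10`. -/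
theorem bernstein_inequality {Ω : Type*} [MeasurableSpace Ω]
    (P : Measure Ω) [IsProbabilityMeasure P] (N : ℕ) (hN : 1 ≤ N)
    (X : Fin N → Ω → ℝ) (hmeas : ∀ i, Measurable (X i))
    (hint : ∀ i, Integrable (X i) P) (hmean : ∀ i, ∫ ω, X i ω ∂P = 0)
    (hindep : iIndepFun X P)
    (hfin : ∀ i, psiNorm 1 P (X i) ≠ ⊤)
    (R : ℝ) (hR : R = ⨆ i, (psiNorm 1 P (X i)).toReal) (hRpos : 0 < R) :
    ∀ t : ℝ, 0 ≤ t →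
      P {ω | t ≤ |(1 / N : ℝ) * ∑ i, X i ω|} ≤
        ENNReal.ofReal (2 * Real.exp (-(1 / 10) * min (t ^ 2 / R ^ 2) (t / R) * N)) := by
  intro t ht
  have hNpos : (0:ℝ) < N := by exact_mod_cast Nat.lt_of_lt_of_le Nat.zero_lt_one hN
  have hpsi : ∀ i, ∫⁻ ω, ENNReal.ofReal (Real.exp (|X i ω| / R)) ∂P ≤ 2 := by
    intro i
    apply BernsteinAux.psi_to_exp P (X i) (hmeas i) (hfin i) R hRpos
    rw [hR]
    exact le_ciSup (f := fun i => (psiNorm 1 P (X i)).toReal) (Set.Finite.bddAbove (Set.finite_range _)) i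
  have hmeasn : ∀ i, Measurable (fun ω => -X i ω) := fun i => (hmeas i).neg
  have hintn : ∀ i, Integrable (fun ω => -X i ω) P := fun i => (hint i).neg
  have hmeann : ∀ i, ∫ ω, -X i ω ∂P = 0 := fun i => by
    rw [integral_neg, hmean i, neg_zero]
  have hindepn : iIndepFun (fun i ω => -X i ω) P :=
    hindep.comp (fun _ => Neg.neg) (fun _ => measurable_neg)
  have hpsin : ∀ i, ∫⁻ ω, ENNReal.ofReal (Real.exp (|-X i ω| / R)) ∂P ≤ 2 := by
    intro i; simpa [abs_neg] using hpsi i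
  have h1 := BernsteinAux.one_sided P N X hmeas hint hmean hindep R hRpos hpsi t ht
  have h2 := BernsteinAux.one_sided P N (fun i ω => -X i ω) hmeasn hintn hmeann hindepn
    R hRpos hpsin t ht
  have hsub : {ω | t ≤ |(1 / N : ℝ) * ∑ i, X i ω|} ⊆
      {ω | (N:ℝ) * t ≤ ∑ i, X i ω} ∪ {ω | (N:ℝ) * t ≤ ∑ i, (fun i ω => -X i ω) i ω} := by
    intro ω hω
    simp only [Set.mem_setOf_eq] at hω
    have habs : |(1 / N : ℝ) * ∑ i, X i ω| = (1/N) * |∑ i, X i ω| := by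
      rw [abs_mul, abs_of_pos (by positivity : (0:ℝ) < 1 / N)]
    rw [habs] at hω
    have hNt : (N:ℝ) * t ≤ |∑ i, X i ω| := by
      have h3 := mul_le_mul_of_nonneg_left hω hNpos.le
      calc (N:ℝ)*t ≤ (N:ℝ) * ((1/N) * |∑ i, X i ω|) := h3
        _ = |∑ i, X i ω| := by field_simp
    rcases le_or_gt 0 (∑ i, X i ω) with hc | hc
    · left
      rw [abs_of_nonneg hc] at hNt
      exact hNt
    · right
      rw [abs_of_neg hc] at hNt
      simp only [Set.mem_setOf_eq]
      simpa using hNt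
  calc P {ω | t ≤ |(1 / N : ℝ) * ∑ i, X i ω|}
      ≤ P ({ω | (N:ℝ) * t ≤ ∑ i, X i ω} ∪
          {ω | (N:ℝ) * t ≤ ∑ i, (fun i ω => -X i ω) i ω}) := measure_mono hsub
    _ ≤ P {ω | (N:ℝ) * t ≤ ∑ i, X i ω} +
        P {ω | (N:ℝ) * t ≤ ∑ i, (fun i ω => -X i ω) i ω} := measure_union_le _ _
    _ ≤ ENNReal.ofReal (Real.exp (-(1 / 10) * min (t ^ 2 / R ^ 2) (t / R) * N)) +
        ENNReal.ofReal (Real.exp (-(1 / 10) * min (t ^ 2 / R ^ 2) (t / R) * N)) :=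
          add_le_add h1 h2
    _ = ENNReal.ofReal (2 * Real.exp (-(1 / 10) * min (t ^ 2 / R ^ 2) (t / R) * N)) := by
        rw [← ENNReal.ofReal_add (Real.exp_nonneg _) (Real.exp_nonneg _)]
        ring_nf
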